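/- Let w = x^{a₁}y^{b₁}⋯x^{a_l}y^{b_l} with all a_i, b_i nonzero, let p be a prime with p ∤ a_i b_i for all i, and set g(U) = [[1,0],[U,1]] and h = [[1,1],[0,1]] over F_p[U]. Then r(U) := tr(w(g(U), h)) ∈ F_p[U] is a polynomial of degree exactly l in U with leading coefficient a₁b₁⋯a_lb_l mod p. -/

import Mathlib

/-- Evaluation of the word `w = x^{a₁}y^{b₁}⋯x^{a_l}y^{b_l}` at a pair of group
elements. -/
def wordEval {G : Type*} [Group G] {l : ℕ} (a b : Fin l → ℤ) (g h : G) : G :=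
  (List.ofFn fun i : Fin l => g ^ a i * h ^ b i).prod

/-- The matrix `g(U) = [[1,0],[U,1]]` as an element of `SL₂(F_p[U])`. -/
noncomputable def lowerUnip (p : ℕ) : Matrix.SpecialLinearGroup (Fin 2) (Polynomial (ZMod p)) :=
  ⟨!![1, 0; Polynomial.X, 1], by simp [Matrix.det_fin_two_of]⟩

/-- The matrix `h = [[1,1],[0,1]]` as an element of `SL₂(F_p[U])`. -/
noncomputable def upperUnip (p : ℕ) : Matrix.SpecialLinearGroup (Fin 2) (Polynomial (ZMod p)) :=
  ⟨!![1, 1; 0, 1], by simp [Matrix.det_fin_two_of]⟩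

open Polynomial Matrix

lemma lowerUnip_zpow (p : ℕ) (n : ℤ) :
    (((lowerUnip p) ^ n : Matrix.SpecialLinearGroup (Fin 2) (Polynomial (ZMod p))) :
      Matrix (Fin 2) (Fin 2) (Polynomial (ZMod p)))
      = !![1, 0; Polynomial.C ((n : ZMod p)) * Polynomial.X, 1] := by
  have hinv : (lowerUnip p)⁻¹ =
      (⟨!![1, 0; -Polynomial.X, 1], by simp [Matrix.det_fin_two_of]⟩ :
        Matrix.SpecialLinearGroup (Fin 2) (Polynomial (ZMod p))) := by
    apply inv_eq_of_mul_eq_one_right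
    ext i j : 1
    change ((lowerUnip p : Matrix (Fin 2) (Fin 2) (Polynomial (ZMod p))) * !![1, 0; -Polynomial.X, 1] :
      Matrix (Fin 2) (Fin 2) (Polynomial (ZMod p))) i j = _
    simp only [Matrix.SpecialLinearGroup.coe_mul, lowerUnip]
    fin_cases i <;> fin_cases j <;>
      simp [Matrix.mul_apply, Fin.sum_univ_two, Matrix.one_fin_two]
  induction n using Int.induction_on with
  | zero => simp [Matrix.one_fin_two]
  | succ k ih =>
      rw [_root_.zpow_add_one, Matrix.SpecialLinearGroup.coe_mul, ih]
      refine Matrix.ext fun i j => ?_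
      simp only [lowerUnip]
      fin_cases i <;> fin_cases j <;>
        simp [Matrix.mul_apply, Fin.sum_univ_two] <;> push_cast <;> ring
  | pred k ih =>
      rw [_root_.zpow_sub_one, Matrix.SpecialLinearGroup.coe_mul, ih, hinv]
      refine Matrix.ext fun i j => ?_
      fin_cases i <;> fin_cases j <;>
        simp [Matrix.mul_apply, Fin.sum_univ_two] <;> push_cast <;> ring

lemma upperUnip_zpow (p : ℕ) (n : ℤ) :
    (((upperUnip p) ^ n : Matrix.SpecialLinearGroup (Fin 2) (Polynomial (ZMod p))) :
      Matrix (Fin 2) (Fin 2) (Polynomial (ZMod p)))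
      = !![1, Polynomial.C ((n : ZMod p)); 0, 1] := by
  have hinv : (upperUnip p)⁻¹ =
      (⟨!![1, -1; 0, 1], by simp [Matrix.det_fin_two_of]⟩ :
        Matrix.SpecialLinearGroup (Fin 2) (Polynomial (ZMod p))) := by
    apply inv_eq_of_mul_eq_one_right
    ext i j : 1
    change ((upperUnip p : Matrix (Fin 2) (Fin 2) (Polynomial (ZMod p))) * !![1, -1; 0, 1] :
      Matrix (Fin 2) (Fin 2) (Polynomial (ZMod p))) i j = _
    simp only [Matrix.SpecialLinearGroup.coe_mul, upperUnip]
    fin_cases i <;> fin_cases j <;>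
      simp [Matrix.mul_apply, Fin.sum_univ_two, Matrix.one_fin_two]
  induction n using Int.induction_on with
  | zero => simp [Matrix.one_fin_two]
  | succ k ih =>
      rw [_root_.zpow_add_one, Matrix.SpecialLinearGroup.coe_mul, ih]
      refine Matrix.ext fun i j => ?_
      simp only [upperUnip]
      fin_cases i <;> fin_cases j <;>
        simp [Matrix.mul_apply, Fin.sum_univ_two] <;> push_cast <;> ring
  | pred k ih =>
      rw [_root_.zpow_sub_one, Matrix.SpecialLinearGroup.coe_mul, ih, hinv]
      refine Matrix.ext fun i j => ?_
      fin_cases i <;> fin_cases j <;>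
        simp [Matrix.mul_apply, Fin.sum_univ_two] <;> push_cast <;> ring

lemma step_matrix (p : ℕ) (n m : ℤ) :
    (((lowerUnip p) ^ n * (upperUnip p) ^ m :
        Matrix.SpecialLinearGroup (Fin 2) (Polynomial (ZMod p))) :
      Matrix (Fin 2) (Fin 2) (Polynomial (ZMod p)))
      = !![1, Polynomial.C ((m : ZMod p));
          Polynomial.C ((n : ZMod p)) * Polynomial.X,
          Polynomial.C ((n : ZMod p) * (m : ZMod p)) * Polynomial.X + Polynomial.C 1] := by
  rw [Matrix.SpecialLinearGroup.coe_mul, lowerUnip_zpow, upperUnip_zpow]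
  refine Matrix.ext fun i j => ?_
  fin_cases i <;> fin_cases j <;>
    simp [Matrix.mul_apply, Fin.sum_univ_two, _root_.map_mul] <;> ring


noncomputable def wordMat (p : ℕ) {l : ℕ} (a b : Fin l → ℤ) :
    Matrix (Fin 2) (Fin 2) (Polynomial (ZMod p)) :=
  ((wordEval a b (lowerUnip p) (upperUnip p) :
      Matrix.SpecialLinearGroup (Fin 2) (Polynomial (ZMod p))) :
    Matrix (Fin 2) (Fin 2) (Polynomial (ZMod p)))

lemma wordMat_succ (p : ℕ) {l : ℕ} (a b : Fin (l + 1) → ℤ) :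
    wordMat p a b = wordMat p (a ∘ Fin.castSucc) (b ∘ Fin.castSucc) *
      (((lowerUnip p) ^ (a (Fin.last l)) * (upperUnip p) ^ (b (Fin.last l)) :
          Matrix.SpecialLinearGroup (Fin 2) (Polynomial (ZMod p))) :
        Matrix (Fin 2) (Fin 2) (Polynomial (ZMod p))) := by
  unfold wordMat wordEval
  rw [List.ofFn_succ', List.prod_concat, Matrix.SpecialLinearGroup.coe_mul]
  rfl

lemma aux_main (p : ℕ) [Fact p.Prime] :
    ∀ (l : ℕ) (a b : Fin (l + 1) → ℤ),
      (∀ i, ((a i : ZMod p)) ≠ 0) → (∀ i, ((b i : ZMod p)) ≠ 0) →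
      (wordMat p a b 0 0).degree ≤ (l : ℕ) ∧
      (wordMat p a b 0 1).degree ≤ (l : ℕ) ∧
      (wordMat p a b 1 0).degree ≤ (l + 1 : ℕ) ∧
      (wordMat p a b 1 1).degree = (l + 1 : ℕ) ∧
      (wordMat p a b 1 1).leadingCoeff = ∏ i, ((a i : ZMod p) * (b i : ZMod p)) := by
  intro l
  induction l with
  | zero =>
      intro a b ha hb
      have hM : wordMat p a b =
          !![1, Polynomial.C ((b 0 : ZMod p));
            Polynomial.C ((a 0 : ZMod p)) * Polynomial.X,
            Polynomial.C ((a 0 : ZMod p) * (b 0 : ZMod p)) * Polynomial.X + Polynomial.C 1] := by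
        unfold wordMat wordEval
        rw [show (List.ofFn fun i : Fin 1 => lowerUnip p ^ a i * upperUnip p ^ b i) =
            [lowerUnip p ^ a 0 * upperUnip p ^ b 0] from by simp [List.ofFn_succ],
          List.prod_singleton, step_matrix]
      have hab : (a 0 : ZMod p) * (b 0 : ZMod p) ≠ 0 := mul_ne_zero (ha 0) (hb 0)
      rw [hM]
      refine ⟨?_, ?_, ?_, ?_, ?_⟩
      · simpa using degree_one_le
      · simpa using degree_C_le (a := ((b 0 : ZMod p)))
      · simpa using degree_C_mul_X_le ((a 0 : ZMod p))
      · simpa using degree_linear (b := (1 : ZMod p)) hab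
      · simpa [Fin.prod_univ_one] using leadingCoeff_linear (b := (1 : ZMod p)) hab
  | succ l ih =>
      intro a b ha hb
      obtain ⟨h00, h01, h10, h11, hlc⟩ :=
        ih (a ∘ Fin.castSucc) (b ∘ Fin.castSucc) (fun i => ha _) (fun i => hb _)
      set M := wordMat p (a ∘ Fin.castSucc) (b ∘ Fin.castSucc) with hMdef
      set n := a (Fin.last (l + 1)) with hn
      set m := b (Fin.last (l + 1)) with hm
      have hstep := wordMat_succ p a b
      rw [step_matrix] at hstep
      have hne : (n : ZMod p) * (m : ZMod p) ≠ 0 :=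
        mul_ne_zero (ha (Fin.last (l + 1))) (hb (Fin.last (l + 1)))
      have hlin : (Polynomial.C ((n : ZMod p) * (m : ZMod p)) * Polynomial.X +
          Polynomial.C 1).degree = 1 := degree_linear hne
      have hlinle : (Polynomial.C ((n : ZMod p) * (m : ZMod p)) * Polynomial.X +
          Polynomial.C 1 : Polynomial (ZMod p)).degree ≤ 1 := le_of_eq hlin
      have hcx : (Polynomial.C ((n : ZMod p)) * Polynomial.X :
          Polynomial (ZMod p)).degree ≤ 1 := degree_C_mul_X_le _
      have e00 : wordMat p a b 0 0 =
          M 0 0 * 1 + M 0 1 * (Polynomial.C ((n : ZMod p)) * Polynomial.X) := by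
        rw [hstep]; simp [Matrix.mul_apply, Fin.sum_univ_two, hMdef, hn, hm]
      have e01 : wordMat p a b 0 1 = M 0 0 * Polynomial.C ((m : ZMod p)) +
          M 0 1 * (Polynomial.C ((n : ZMod p) * (m : ZMod p)) * Polynomial.X +
            Polynomial.C 1) := by
        rw [hstep]; simp [Matrix.mul_apply, Fin.sum_univ_two, hMdef, hn, hm]
      have e10 : wordMat p a b 1 0 =
          M 1 0 * 1 + M 1 1 * (Polynomial.C ((n : ZMod p)) * Polynomial.X) := by
        rw [hstep]; simp [Matrix.mul_apply, Fin.sum_univ_two, hMdef, hn, hm]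
      have e11 : wordMat p a b 1 1 = M 1 0 * Polynomial.C ((m : ZMod p)) +
          M 1 1 * (Polynomial.C ((n : ZMod p) * (m : ZMod p)) * Polynomial.X +
            Polynomial.C 1) := by
        rw [hstep]; simp [Matrix.mul_apply, Fin.sum_univ_two, hMdef, hn, hm]
      have hcast1 : ((l : WithBot ℕ) + 1) = ((l + 1 : ℕ) : WithBot ℕ) := by push_cast; ring
      have hcast2 : (((l + 1 : ℕ) : WithBot ℕ) + 1) = ((l + 1 + 1 : ℕ) : WithBot ℕ) := by
        push_cast; ring
      have hd2 : (M 1 1 * (Polynomial.C ((n : ZMod p) * (m : ZMod p)) * Polynomial.X +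
          Polynomial.C 1)).degree = ((l + 1 + 1 : ℕ) : WithBot ℕ) := by
        rw [degree_mul, h11, hlin, hcast2]
      have hd1 : (M 1 0 * Polynomial.C ((m : ZMod p))).degree <
          ((l + 1 + 1 : ℕ) : WithBot ℕ) := by
        refine lt_of_le_of_lt (degree_mul_le _ _) ?_
        refine lt_of_le_of_lt (add_le_add h10 degree_C_le) ?_
        rw [add_zero]
        exact_mod_cast Nat.lt_succ_self (l + 1)
      have hd2lt : (M 1 0 * Polynomial.C ((m : ZMod p))).degree <
          (M 1 1 * (Polynomial.C ((n : ZMod p) * (m : ZMod p)) * Polynomial.X +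
            Polynomial.C 1)).degree := by rw [hd2]; exact hd1
      refine ⟨?_, ?_, ?_, ?_, ?_⟩
      · rw [e00]
        refine le_trans (degree_add_le _ _) (max_le ?_ ?_)
        · rw [mul_one]
          exact h00.trans (by exact_mod_cast Nat.le_succ l)
        · refine le_trans (degree_mul_le _ _) ?_
          exact le_trans (add_le_add h01 hcx) (le_of_eq hcast1)
      · rw [e01]
        refine le_trans (degree_add_le _ _) (max_le ?_ ?_)
        · refine le_trans (degree_mul_le _ _) ?_
          refine le_trans (add_le_add h00 degree_C_le) ?_
          rw [add_zero]
          exact_mod_cast Nat.le_succ l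
        · refine le_trans (degree_mul_le _ _) ?_
          exact le_trans (add_le_add h01 hlinle) (le_of_eq hcast1)
      · rw [e10]
        refine le_trans (degree_add_le _ _) (max_le ?_ ?_)
        · rw [mul_one]
          exact h10.trans (by exact_mod_cast Nat.le_succ (l + 1))
        · refine le_trans (degree_mul_le _ _) ?_
          refine le_trans (add_le_add (le_of_eq h11) hcx) ?_
          exact le_of_eq hcast2
      · rw [e11, degree_add_eq_right_of_degree_lt hd2lt, hd2]
      · rw [e11, leadingCoeff_add_of_degree_lt hd2lt, leadingCoeff_mul, hlc,
          leadingCoeff_linear hne]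
        conv_rhs => rw [Fin.prod_univ_castSucc]
        rfl

/-- For `w = x^{a₁}y^{b₁}⋯x^{a_l}y^{b_l}` with nonzero exponents not
divisible by the prime `p`, the trace `r(U) = tr w(g(U), h)` with
`g(U) = [[1,0],[U,1]]`, `h = [[1,1],[0,1]]` over `F_p[U]` is a polynomial of degree
exactly `l` with leading coefficient `a₁b₁⋯a_lb_l mod p`. -/
theorem trace_word_polynomial_degree
    (l : ℕ) (hl : 0 < l) (a b : Fin l → ℤ) (ha : ∀ i, a i ≠ 0) (hb : ∀ i, b i ≠ 0)
    (p : ℕ) (hp : p.Prime)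
    (hpa : ∀ i, ¬ (p : ℤ) ∣ a i) (hpb : ∀ i, ¬ (p : ℤ) ∣ b i) :
    (((wordEval a b (lowerUnip p) (upperUnip p) :
          Matrix.SpecialLinearGroup (Fin 2) (Polynomial (ZMod p))) :
        Matrix (Fin 2) (Fin 2) (Polynomial (ZMod p))).trace).degree = l ∧
    (((wordEval a b (lowerUnip p) (upperUnip p) :
          Matrix.SpecialLinearGroup (Fin 2) (Polynomial (ZMod p))) :
        Matrix (Fin 2) (Fin 2) (Polynomial (ZMod p))).trace).leadingCoeff =
      ((∏ i : Fin l, a i * b i : ℤ) : ZMod p) := by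
  haveI : Fact p.Prime := ⟨hp⟩
  obtain ⟨l, rfl⟩ : ∃ k, l = k + 1 := ⟨l - 1, (Nat.succ_pred_eq_of_pos hl).symm⟩
  have ha' : ∀ i, ((a i : ZMod p)) ≠ 0 := fun i h =>
    hpa i ((ZMod.intCast_zmod_eq_zero_iff_dvd _ _).mp h)
  have hb' : ∀ i, ((b i : ZMod p)) ≠ 0 := fun i h =>
    hpb i ((ZMod.intCast_zmod_eq_zero_iff_dvd _ _).mp h)
  obtain ⟨h00, h01, h10, h11, hlc⟩ := aux_main p l a b ha' hb'
  have htr : (wordMat p a b).trace = wordMat p a b 0 0 + wordMat p a b 1 1 :=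
    Matrix.trace_fin_two _
  have hlt : (wordMat p a b 0 0).degree < (wordMat p a b 1 1).degree := by
    rw [h11]
    exact lt_of_le_of_lt h00 (by exact_mod_cast Nat.lt_succ_self l)
  have hdeg : ((wordMat p a b).trace).degree = ((l + 1 : ℕ) : WithBot ℕ) := by
    rw [htr, degree_add_eq_right_of_degree_lt hlt, h11]
  have hlead : ((wordMat p a b).trace).leadingCoeff =
      ∏ i, ((a i : ZMod p) * (b i : ZMod p)) := by
    rw [htr, leadingCoeff_add_of_degree_lt hlt, hlc]
  have hc : ((∏ i, a i * b i : ℤ) : ZMod p) = ∏ i, ((a i : ZMod p) * (b i : ZMod p)) := by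
    push_cast
    rfl
  exact ⟨hdeg, hlead.trans hc.symm⟩
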